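/- Let X be a finite set, T a stochastic matrix on X, L the associated generator, Γ the carré du champ operator, and P_t = exp(tL) the semigroup (matrix exponential). Assume the non-negative curvature condition: for all t ≥ 0 and all g : X → ℝ, (Γ(P_t g))(x) ≤ (P_t(Γ g))(x) for every x ∈ X. Then the local Poincaré inequality holds: for all t ≥ 0, all g : X → ℝ and all x ∈ X, (P_t(g²))(x) - ((P_t g)(x))² ≤ 2t·(P_t(Γ g))(x). -/

import Mathlib

variable {X : Type*}

/-- `T` is a stochastic matrix: nonnegative entries and unit row sums. -/
def IsStochastic [Fintype X] (T : X → X → ℝ) : Prop :=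
  (∀ x y, 0 ≤ T x y) ∧ ∀ x, ∑ y, T x y = 1

/-- The generator: `(L f)(x) = ∑_y T(x,y) (f(y) - f(x))`. -/
noncomputable def gen [Fintype X] (T : X → X → ℝ) (f : X → ℝ) : X → ℝ :=
  fun x => ∑ y, T x y * (f y - f x)

/-- The carré du champ operator: `(Γ f)(x) = (1/2) ∑_y T(x,y) (f(y) - f(x))²`. -/
noncomputable def carre [Fintype X] (T : X → X → ℝ) (f : X → ℝ) : X → ℝ :=
  fun x => (1 / 2) * ∑ y, T x y * (f y - f x) ^ 2

/-- The generator as a matrix: `L = T - Id`. -/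
noncomputable def genMat [Fintype X] [DecidableEq X] (T : X → X → ℝ) : Matrix X X ℝ :=
  fun x y => T x y - if x = y then 1 else 0

/-- The heat semigroup `P_t = exp (t L)` (matrix exponential). -/
noncomputable def heatSG [Fintype X] [DecidableEq X] (T : X → X → ℝ) (t : ℝ) : Matrix X X ℝ :=
  NormedSpace.exp (t • genMat T)

open NormedSpace

attribute [local instance] Matrix.linftyOpNormedAddCommGroup Matrix.linftyOpNormedRing
  Matrix.linftyOpNormedAlgebra

section Aux
variable [Fintype X] [DecidableEq X]

/-- entry evaluation as a continuous linear map -/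
noncomputable def entryCLM (a b : X) : Matrix X X ℝ →L[ℝ] ℝ :=
  LinearMap.toContinuousLinearMap
    { toFun := fun M => M a b
      map_add' := fun _ _ => rfl
      map_smul' := fun _ _ => rfl }

lemma pow_entry_nonneg {M : Matrix X X ℝ} (hM : ∀ a b, 0 ≤ M a b) :
    ∀ (n : ℕ) (a b : X), 0 ≤ (M ^ n) a b := by
  intro n
  induction n with
  | zero => intro a b; simp [Matrix.one_apply]; positivity
  | succ n ih =>
    intro a b
    rw [pow_succ, Matrix.mul_apply]
    exact Finset.sum_nonneg fun k _ => mul_nonneg (ih a k) (hM k b)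

lemma exp_entry_nonneg {M : Matrix X X ℝ} (hM : ∀ a b, 0 ≤ M a b) (a b : X) :
    0 ≤ exp M a b := by
  have hs : Summable (fun n : ℕ => ((Nat.factorial n : ℝ)⁻¹) • M ^ n) := expSeries_summable' M
  have h1 : exp M a b = ∑' n : ℕ, ((Nat.factorial n : ℝ)⁻¹) • (M ^ n) a b := by
    rw [exp_eq_tsum ℝ]
    have := (entryCLM a b).map_tsum hs
    exact this
  rw [h1]
  exact tsum_nonneg fun n => smul_nonneg (by positivity) (pow_entry_nonneg hM n a b)

lemma genMat_eq (T : X → X → ℝ) : genMat T = Matrix.of T - 1 := by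
  ext a b
  simp [genMat, Matrix.one_apply]

lemma heat_entry_nonneg {T : X → X → ℝ} (hT : IsStochastic T) {s : ℝ} (hs : 0 ≤ s)
    (a b : X) : 0 ≤ heatSG T s a b := by
  have h1 : s • genMat T = (-s) • (1 : Matrix X X ℝ) + s • Matrix.of T := by
    rw [genMat_eq, smul_sub]; module
  have hcomm : Commute ((-s) • (1 : Matrix X X ℝ)) (s • Matrix.of T) :=
    ((Commute.one_left _).smul_left _).smul_right _
  have h2 : heatSG T s = exp ((-s) • (1 : Matrix X X ℝ)) * exp (s • Matrix.of T) := by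
    show exp (s • genMat T) = _
    rw [h1, Matrix.exp_add_of_commute _ _ hcomm]
  have h3 : (-s) • (1 : Matrix X X ℝ) = algebraMap ℝ (Matrix X X ℝ) (-s) := by
    rw [Algebra.algebraMap_eq_smul_one]
  have h4 : exp ((-s) • (1 : Matrix X X ℝ)) = Real.exp (-s) • (1 : Matrix X X ℝ) := by
    erw [h3, ← algebraMap_exp_comm]
    rw [ Algebra.algebraMap_eq_smul_one, Real.exp_eq_exp_ℝ]
  rw [h2, h4, Matrix.smul_mul]
  have : ∀ c d, (0:ℝ) ≤ (s • Matrix.of T) c d := fun c d =>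
    smul_nonneg hs (hT.1 c d)
  have := exp_entry_nonneg this a b
  simp only [Matrix.smul_apply, Matrix.one_mul]
  positivity

lemma heat_mul (T : X → X → ℝ) (s u : ℝ) : heatSG T s * heatSG T u = heatSG T (s + u) := by
  show exp _ * exp _ = exp _
  rw [add_smul, Matrix.exp_add_of_commute]
  exact ((Commute.refl (genMat T)).smul_left s).smul_right u

lemma heat_zero (T : X → X → ℝ) : heatSG T 0 = 1 := by
  show exp _ = 1
  rw [zero_smul, exp_zero]

lemma heat_comm (T : X → X → ℝ) (s : ℝ) : heatSG T s * genMat T = genMat T * heatSG T s := by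
  show exp _ * _ = _ * exp _
  exact (((Commute.refl (genMat T)).smul_left s).exp_left).symm.eq.symm

lemma heat_entry_hasDerivAt (T : X → X → ℝ) (s : ℝ) (a b : X) :
    HasDerivAt (fun u : ℝ => heatSG T u a b) ((heatSG T s * genMat T) a b) s := by
  have h : HasDerivAt (fun u : ℝ => exp (u • genMat T))
      (exp (s • genMat T) * genMat T) s := hasDerivAt_exp_smul_const (genMat T) s
  have := (entryCLM a b).hasFDerivAt.comp_hasDerivAt s h
  exact this

end Aux

section Main
variable [Fintype X] [DecidableEq X]

lemma key_alg {T : X → X → ℝ} (hT : IsStochastic T) (v : X → ℝ) (a : X) :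
    (genMat T).mulVec (fun y => v y ^ 2) a - 2 * v a * (genMat T).mulVec v a
      = 2 * carre T v a := by
  have hrow := hT.2 a
  have hmv : ∀ w : X → ℝ, (genMat T).mulVec w a = (∑ y, T a y * w y) - w a := by
    intro w
    simp only [Matrix.mulVec, dotProduct, genMat, sub_mul, Finset.sum_sub_distrib,
      ite_mul, one_mul, zero_mul, Finset.sum_ite_eq, Finset.mem_univ, if_true]
  rw [hmv, hmv, carre]
  have h1 : ∑ y, T a y * (v y - v a) ^ 2
      = ∑ y, (T a y * v y ^ 2 - 2 * v a * (T a y * v y) + T a y * v a ^ 2) := by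
    apply Finset.sum_congr rfl; intro y _; ring
  have h2 : ∑ y, T a y * v a ^ 2 = v a ^ 2 := by
    rw [← Finset.sum_mul, hrow, one_mul]
  have h3 : ∑ y, 2 * v a * (T a y * v y) = 2 * v a * ∑ y, T a y * v y := by
    rw [Finset.mul_sum]
  rw [h1, Finset.sum_add_distrib, Finset.sum_sub_distrib, h2, h3]
  ring

theorem local_poincare' (T : X → X → ℝ) (hT : IsStochastic T)
    (hcurv : ∀ t : ℝ, 0 ≤ t → ∀ g : X → ℝ, ∀ x : X,
      carre T ((heatSG T t).mulVec g) x ≤ (heatSG T t).mulVec (carre T g) x) :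
    ∀ t : ℝ, 0 ≤ t → ∀ g : X → ℝ, ∀ x : X,
      (heatSG T t).mulVec (fun z => g z ^ 2) x - ((heatSG T t).mulVec g x) ^ 2 ≤
        2 * t * (heatSG T t).mulVec (carre T g) x := by
  intro t ht g x
  set L := genMat T with hL
  set v : ℝ → X → ℝ := fun s => (heatSG T (t - s)).mulVec g with hv
  set f : ℝ → ℝ := fun s => ∑ y, heatSG T s x y * (v s y) ^ 2 with hf
  set C : ℝ := 2 * (heatSG T t).mulVec (carre T g) x with hC
  -- derivative of v
  have hvd : ∀ (s : ℝ) (y : X), HasDerivAt (fun u => v u y) (-(L.mulVec (v s) y)) s := by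
    intro s y
    have hentry : ∀ z, HasDerivAt (fun u : ℝ => heatSG T (t - u) y z)
        (-((heatSG T (t - s) * L) y z)) s := by
      intro z
      have h1 := heat_entry_hasDerivAt T (t - s) y z
      have h2 : HasDerivAt (fun u : ℝ => t - u) (-1) s := by
        simpa using ((hasDerivAt_id s).const_sub t)
      have := h1.comp s h2
      simpa [mul_comm, Function.comp_def] using this
    have hsum : HasDerivAt (fun u : ℝ => ∑ z, heatSG T (t - u) y z * g z)
        (∑ z, -((heatSG T (t - s) * L) y z) * g z) s :=
      HasDerivAt.fun_sum fun z _ => (hentry z).mul_const (g z)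
    have h5 : ∑ z, (L * heatSG T (t - s)) y z * g z = L.mulVec (v s) y := by
      simp only [hv, Matrix.mul_apply, Matrix.mulVec, dotProduct, Finset.sum_mul,
        Finset.mul_sum, mul_assoc]
      exact Finset.sum_comm
    have heq : (∑ z, -((heatSG T (t - s) * L) y z) * g z) = -(L.mulVec (v s) y) := by
      rw [show heatSG T (t - s) * L = L * heatSG T (t - s) from heat_comm T (t - s), ← h5]
      simp [neg_mul, Finset.sum_neg_distrib]
    exact heq ▸ hsum
  -- derivative of f
  have hfd : ∀ s : ℝ, HasDerivAt f (∑ y, heatSG T s x y * (2 * carre T (v s) y)) s := by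
    intro s
    have hterm : ∀ y, HasDerivAt (fun u => heatSG T u x y * (v u y) ^ 2)
        ((heatSG T s * L) x y * (v s y) ^ 2
          + heatSG T s x y * (2 * v s y * -(L.mulVec (v s) y))) s := by
      intro y
      have h1 := heat_entry_hasDerivAt T s x y
      have h2 : HasDerivAt (fun u => (v u y) ^ 2) (2 * v s y * -(L.mulVec (v s) y)) s := by
        have := (hvd s y).fun_pow 2
        simpa [mul_comm, mul_assoc, mul_left_comm] using this
      exact h1.mul h2
    have hsum : HasDerivAt (fun u => ∑ y, heatSG T u x y * (v u y) ^ 2)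
        (∑ y, ((heatSG T s * L) x y * (v s y) ^ 2
          + heatSG T s x y * (2 * v s y * -(L.mulVec (v s) y)))) s :=
      HasDerivAt.fun_sum fun y _ => hterm y
    convert hsum using 1
    have hswap : ∑ y, (heatSG T s * L) x y * (v s y) ^ 2
        = ∑ y, heatSG T s x y * L.mulVec (fun z => v s z ^ 2) y := by
      simp only [Matrix.mul_apply, Matrix.mulVec, dotProduct, Finset.sum_mul, Finset.mul_sum]
      rw [Finset.sum_comm]
      apply Finset.sum_congr rfl; intro y _
      apply Finset.sum_congr rfl; intro k _
      ring
    calc ∑ y, heatSG T s x y * (2 * carre T (v s) y)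
        = ∑ y, (heatSG T s x y * L.mulVec (fun z => v s z ^ 2) y
            + heatSG T s x y * (2 * v s y * -(L.mulVec (v s) y))) := by
          apply Finset.sum_congr rfl; intro y _
          have h := key_alg hT (v s) y
          rw [hL, ← h]
          ring
      _ = ∑ y, ((heatSG T s * L) x y * (v s y) ^ 2
            + heatSG T s x y * (2 * v s y * -(L.mulVec (v s) y))) := by
          rw [Finset.sum_add_distrib, Finset.sum_add_distrib, hswap]
      
  -- bound on the derivative on the interior
  have hbound : ∀ s ∈ Set.Ioo (0:ℝ) t,
      (∑ y, heatSG T s x y * (2 * carre T (v s) y)) ≤ C := by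
    intro s hs
    have hs0 : 0 ≤ s := le_of_lt hs.1
    have hts : 0 ≤ t - s := by linarith [hs.2]
    have hstep : ∀ y, 2 * carre T (v s) y
        ≤ 2 * (heatSG T (t - s)).mulVec (carre T g) y := by
      intro y
      have := hcurv (t - s) hts g y
      rw [hv]; linarith
    have h1 : (∑ y, heatSG T s x y * (2 * carre T (v s) y))
        ≤ ∑ y, heatSG T s x y * (2 * (heatSG T (t - s)).mulVec (carre T g) y) :=
      Finset.sum_le_sum fun y _ => mul_le_mul_of_nonneg_left (hstep y)
        (heat_entry_nonneg hT hs0 x y)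
    have h2 : (∑ y, heatSG T s x y * (2 * (heatSG T (t - s)).mulVec (carre T g) y)) = C := by
      rw [hC]
      have : (heatSG T s).mulVec ((heatSG T (t - s)).mulVec (carre T g)) x
          = (heatSG T t).mulVec (carre T g) x := by
        rw [Matrix.mulVec_mulVec, heat_mul]
        norm_num
      rw [← this]
      simp only [Matrix.mulVec, dotProduct]
      rw [Finset.mul_sum]
      apply Finset.sum_congr rfl; intro y _; ring
    linarith
  -- monotonicity of C * s - f s
  have hF : ∀ s : ℝ, HasDerivAt (fun u => C * u - f u)
      (C - (∑ y, heatSG T s x y * (2 * carre T (v s) y))) s := by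
    intro s
    simpa using ((hasDerivAt_id s).const_mul C).fun_sub (hfd s)
  have hmono : MonotoneOn (fun u => C * u - f u) (Set.Icc 0 t) := by
    apply monotoneOn_of_deriv_nonneg (convex_Icc 0 t)
    · exact fun s _ => ((hF s).continuousAt).continuousWithinAt
    · exact fun s _ => ((hF s).differentiableAt).differentiableWithinAt
    · intro s hs
      rw [interior_Icc] at hs
      rw [(hF s).deriv]
      linarith [hbound s hs]
  have hm := hmono (Set.left_mem_Icc.2 ht) (Set.right_mem_Icc.2 ht) ht
  simp only [mul_zero, zero_sub] at hm
  -- endpoint values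
  have hft : f t = (heatSG T t).mulVec (fun z => g z ^ 2) x := by
    rw [hf]
    simp only [hv, sub_self, heat_zero, Matrix.one_mulVec]
    simp [Matrix.mulVec, dotProduct]
  have hf0 : f 0 = ((heatSG T t).mulVec g x) ^ 2 := by
    rw [hf]
    simp only [heat_zero, sub_zero]
    rw [show ∑ y, (1 : Matrix X X ℝ) x y * (v 0 y) ^ 2
        = (1 : Matrix X X ℝ).mulVec (fun y => (v 0 y) ^ 2) x from rfl,
      Matrix.one_mulVec]
    simp [hv]
  rw [← hft, ← hf0]
  have : f t - f 0 ≤ C * t := by linarith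
  rw [hC] at this
  linarith

end Main

/-- Evolution of a measure (row vector) `μ_t = μ · exp (t L)`. -/
noncomputable def evolve [Fintype X] [DecidableEq X] (T : X → X → ℝ) (μ : X → ℝ) (t : ℝ) :
    X → ℝ :=
  Matrix.vecMul μ (heatSG T t)

/-- Local Poincaré inequality: non-negative curvature
`Γ P_t g ≤ P_t Γ g` implies `P_t(g²) - (P_t g)² ≤ 2t P_t(Γ g)` pointwise. -/
theorem local_poincare [Fintype X] [DecidableEq X] (T : X → X → ℝ) (hT : IsStochastic T)
    (hcurv : ∀ t : ℝ, 0 ≤ t → ∀ g : X → ℝ, ∀ x : X,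
      carre T ((heatSG T t).mulVec g) x ≤ (heatSG T t).mulVec (carre T g) x) :
    ∀ t : ℝ, 0 ≤ t → ∀ g : X → ℝ, ∀ x : X,
      (heatSG T t).mulVec (fun z => g z ^ 2) x - ((heatSG T t).mulVec g x) ^ 2 ≤
        2 * t * (heatSG T t).mulVec (carre T g) x :=
  local_poincare' T hT hcurv
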